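/- Let n ≥ 1 and let λ, π be real numbers with 0 < 2λ < π, and set ψ = arcosh(π/(2λ)) > 0. Let Z be the n×n tridiagonal Toeplitz matrix with diagonal entries π, first off-diagonal entries λ, and zeros elsewhere. Then the entries of Z⁻¹ decay exponentially off the diagonal: for all 1 ≤ k, l ≤ n, |(Z⁻¹)_{kl}| ≤ exp(−ψ·|l−k|) / (2λ · sinh(ψ) · (1 − exp(−2ψ(n+1)))). -/

import Mathlib

open Matrix Real

/-- The inverse hyperbolic cosine: arcosh x = log (x + sqrt (x^2 - 1)). -/
noncomputable def arcosh (x : ℝ) : ℝ := Real.log (x + Real.sqrt (x ^ 2 - 1))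

lemma arcosh_pos {x : ℝ} (hx : 1 < x) : 0 < _root_.arcosh x := by
  have h2 : 0 ≤ Real.sqrt (x ^ 2 - 1) := Real.sqrt_nonneg _
  exact Real.log_pos (by linarith)

lemma cosh_arcosh {x : ℝ} (hx : 1 < x) : Real.cosh (_root_.arcosh x) = x := by
  have h1 : (0:ℝ) ≤ x ^ 2 - 1 := by nlinarith
  have h2 : 0 ≤ Real.sqrt (x ^ 2 - 1) := Real.sqrt_nonneg _
  have hpos : 0 < x + Real.sqrt (x ^ 2 - 1) := by linarith
  have hsq : Real.sqrt (x ^ 2 - 1) ^ 2 = x ^ 2 - 1 := Real.sq_sqrt h1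
  have hinv : (x + Real.sqrt (x ^ 2 - 1))⁻¹ = x - Real.sqrt (x ^ 2 - 1) :=
    inv_eq_of_mul_eq_one_right (by nlinarith)
  rw [_root_.arcosh, Real.cosh_log hpos, hinv]; ring

lemma sinh_identityC (a b p : ℝ) :
    Real.sinh (a + p) * Real.sinh b - Real.sinh a * Real.sinh (b - p)
      = Real.sinh p * Real.sinh (a + b) := by
  simp [Real.sinh_add, Real.sinh_sub]; ring

lemma sinh_identityB (u p : ℝ) :
    Real.sinh (u - p) + Real.sinh (u + p) = 2 * Real.cosh p * Real.sinh u := by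
  simp [Real.sinh_add, Real.sinh_sub]; ring

lemma two_sinh_le_exp (x : ℝ) : 2 * Real.sinh x ≤ Real.exp x := by
  rw [Real.sinh_eq]; have := Real.exp_pos (-x); linarith

noncomputable def Mentry (n : ℕ) (ψ D : ℝ) (p q : ℤ) : ℝ :=
  (-1:ℝ)^(p+q) * Real.sinh ((min p q : ℤ) * ψ) *
    Real.sinh (((n:ℝ) + 1 - (max p q : ℤ)) * ψ) / D

lemma Mentry_left (n : ℕ) (ψ D : ℝ) (q : ℤ) (hq : 0 ≤ q) : Mentry n ψ D 0 q = 0 := by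
  unfold Mentry
  rw [min_eq_left hq]
  norm_num

lemma Mentry_right (n : ℕ) (ψ D : ℝ) (q : ℤ) (hq : q ≤ (n:ℤ) + 1) :
    Mentry n ψ D ((n:ℤ)+1) q = 0 := by
  unfold Mentry
  rw [max_eq_left hq]
  push_cast
  norm_num

lemma sign_shift (p q : ℤ) : (-1:ℝ)^(p-1+q) = -(-1:ℝ)^(p+q) := by
  have h : p - 1 + q = (p + q) + (-1) := by ring
  rw [h, zpow_add₀ (by norm_num : (-1:ℝ) ≠ 0)]
  norm_num

lemma sign_shift' (p q : ℤ) : (-1:ℝ)^(p+1+q) = -(-1:ℝ)^(p+q) := by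
  have h : p + 1 + q = (p + q) + 1 := by ring
  rw [h, zpow_add₀ (by norm_num : (-1:ℝ) ≠ 0)]
  norm_num

lemma recur (n : ℕ) (lam piv ψ D : ℝ)
    (hpiv : piv = 2 * lam * Real.cosh ψ)
    (hD : D = lam * Real.sinh ψ * Real.sinh (((n:ℝ) + 1) * ψ))
    (hDne : D ≠ 0)
    (p q : ℤ) :
    lam * Mentry n ψ D (p-1) q + piv * Mentry n ψ D p q + lam * Mentry n ψ D (p+1) q
      = if p = q then 1 else 0 := by
  unfold Mentry
  rw [sign_shift, sign_shift']
  rcases lt_trichotomy p q with h | h | h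
  · rw [min_eq_left (by omega : p - 1 ≤ q), min_eq_left (by omega : p ≤ q),
      min_eq_left (by omega : p + 1 ≤ q),
      max_eq_right (by omega : p - 1 ≤ q), max_eq_right (by omega : p ≤ q),
      max_eq_right (by omega : p + 1 ≤ q), if_neg (by omega)]
    push_cast
    have hB : Real.sinh (((p:ℝ) - 1) * ψ) + Real.sinh (((p:ℝ) + 1) * ψ)
        = 2 * Real.cosh ψ * Real.sinh ((p:ℝ) * ψ) := by
      have h := sinh_identityB ((p:ℝ) * ψ) ψ
      rw [show (p:ℝ)*ψ - ψ = ((p:ℝ)-1)*ψ by ring, show (p:ℝ)*ψ + ψ = ((p:ℝ)+1)*ψ by ring] at h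
      exact h
    rw [hpiv]
    linear_combination (-(-1:ℝ)^(p+q) * Real.sinh (((n:ℝ)+1-(q:ℝ))*ψ) * lam / D) * hB
  · subst h
    rw [min_eq_left (by omega : p - 1 ≤ p), min_self,
      min_eq_right (by omega : p ≤ p + 1),
      max_eq_right (by omega : p - 1 ≤ p), max_self,
      max_eq_left (by omega : p ≤ p + 1), if_pos rfl]
    have hs : (-1:ℝ)^(p+p) = 1 := by
      rw [show p + p = 2 * p by ring, _root_.zpow_mul]
      norm_num
    rw [hs]
    push_cast
    have hB : Real.sinh (((p:ℝ) - 1) * ψ) + Real.sinh (((p:ℝ) + 1) * ψ)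
        = 2 * Real.cosh ψ * Real.sinh ((p:ℝ) * ψ) := by
      have h := sinh_identityB ((p:ℝ) * ψ) ψ
      rw [show (p:ℝ)*ψ - ψ = ((p:ℝ)-1)*ψ by ring, show (p:ℝ)*ψ + ψ = ((p:ℝ)+1)*ψ by ring] at h
      exact h
    have hC : Real.sinh (((p:ℝ) + 1) * ψ) * Real.sinh (((n:ℝ) + 1 - (p:ℝ)) * ψ)
        - Real.sinh ((p:ℝ) * ψ) * Real.sinh (((n:ℝ) + 1 - ((p:ℝ)+1)) * ψ)
        = Real.sinh ψ * Real.sinh (((n:ℝ) + 1) * ψ) := by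
      have h := sinh_identityC ((p:ℝ) * ψ) (((n:ℝ) + 1 - (p:ℝ)) * ψ) ψ
      rw [show (p:ℝ)*ψ + ψ = ((p:ℝ)+1)*ψ by ring,
        show ((n:ℝ)+1-(p:ℝ))*ψ - ψ = ((n:ℝ)+1-((p:ℝ)+1))*ψ by ring,
        show (p:ℝ)*ψ + ((n:ℝ)+1-(p:ℝ))*ψ = ((n:ℝ)+1)*ψ by ring] at h
      exact h
    rw [← mul_div_assoc, ← mul_div_assoc, ← mul_div_assoc, ← add_div,
      ← add_div, div_eq_one_iff_eq hDne, hpiv, hD]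
    linear_combination (-(lam * Real.sinh (((n:ℝ)+1-(p:ℝ))*ψ))) * hB + lam * hC
  · rw [min_eq_right (by omega : q ≤ p - 1), min_eq_right (by omega : q ≤ p),
      min_eq_right (by omega : q ≤ p + 1),
      max_eq_left (by omega : q ≤ p - 1), max_eq_left (by omega : q ≤ p),
      max_eq_left (by omega : q ≤ p + 1), if_neg (by omega)]
    push_cast
    have hB : Real.sinh (((n:ℝ) + 1 - ((p:ℝ) - 1)) * ψ) + Real.sinh (((n:ℝ) + 1 - ((p:ℝ) + 1)) * ψ)
        = 2 * Real.cosh ψ * Real.sinh (((n:ℝ) + 1 - (p:ℝ)) * ψ) := by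
      have h := sinh_identityB (((n:ℝ) + 1 - (p:ℝ)) * ψ) ψ
      rw [show ((n:ℝ)+1-(p:ℝ))*ψ - ψ = ((n:ℝ)+1-((p:ℝ)+1))*ψ by ring,
        show ((n:ℝ)+1-(p:ℝ))*ψ + ψ = ((n:ℝ)+1-((p:ℝ)-1))*ψ by ring] at h
      linarith [h]
    rw [hpiv]
    linear_combination (-(-1:ℝ)^(p+q) * Real.sinh ((q:ℝ)*ψ) * lam / D) * hB

/-- Exponential off-diagonal decay of the inverse of a tridiagonal Toeplitz
matrix with diagonal π and off-diagonal λ, where π > 2λ > 0. -/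
theorem stmt_2 (n : ℕ) (hn : 1 ≤ n) (lam piv : ℝ)
    (hlam : 0 < 2 * lam) (hπ : 2 * lam < piv)
    (ψ : ℝ) (hψ : ψ = _root_.arcosh (piv / (2 * lam)))
    (Z : Matrix (Fin n) (Fin n) ℝ)
    (hZ : ∀ i j : Fin n,
      Z i j =
        if (i : ℕ) = (j : ℕ) then piv
        else if ((i : ℤ) - (j : ℤ)).natAbs = 1 then lam
        else 0) :
    ∀ k l : Fin n,
      |Z⁻¹ k l| ≤
        Real.exp (-ψ * |((l : ℕ) : ℝ) - ((k : ℕ) : ℝ)|) /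
          (2 * lam * Real.sinh ψ * (1 - Real.exp (-2 * ψ * ((n : ℝ) + 1)))) := by
  have hlam0 : 0 < lam := by linarith
  have hc1 : (1:ℝ) < piv / (2 * lam) := (one_lt_div hlam).mpr hπ
  have hψ0 : 0 < ψ := hψ ▸ _root_.arcosh_pos hc1
  have hcosh : Real.cosh ψ = piv / (2 * lam) := by rw [hψ]; exact _root_.cosh_arcosh hc1
  have hpiv : piv = 2 * lam * Real.cosh ψ := by rw [hcosh]; field_simp
  have hs0 : 0 < Real.sinh ψ := Real.sinh_pos_iff.mpr hψ0
  set T : ℝ := ((n:ℝ) + 1) * ψ with hT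
  have hT0 : 0 < T := by positivity
  have hsT : 0 < Real.sinh T := Real.sinh_pos_iff.mpr hT0
  set D : ℝ := lam * Real.sinh ψ * Real.sinh T with hD
  have hD0 : 0 < D := by positivity
  have hDne : D ≠ 0 := ne_of_gt hD0
  set M : Matrix (Fin n) (Fin n) ℝ :=
    Matrix.of (fun i j : Fin n => Mentry n ψ D ((i:ℤ)+1) ((j:ℤ)+1)) with hM
  have hMapp : ∀ i j : Fin n, M i j = Mentry n ψ D ((i:ℤ)+1) ((j:ℤ)+1) := fun i j => rfl
  have hZM : Z * M = 1 := by
    ext i j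
    rw [Matrix.mul_apply, Matrix.one_apply]
    have hstep : ∀ x : Fin n, Z i x * M x j =
        (if (x:ℕ) = (i:ℕ) then piv * M x j else 0) +
        ((if (x:ℕ) + 1 = (i:ℕ) then lam * M x j else 0) +
         (if (x:ℕ) = (i:ℕ) + 1 then lam * M x j else 0)) := by
      intro x
      rw [hZ i x]
      split_ifs <;> first | (exfalso; omega) | ring1
    rw [Finset.sum_congr rfl (fun x _ => hstep x), Finset.sum_add_distrib,
      Finset.sum_add_distrib]
    have hS1 : (∑ x : Fin n, if (x:ℕ) = (i:ℕ) then piv * M x j else 0)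
        = piv * Mentry n ψ D ((i:ℤ)+1) ((j:ℤ)+1) := by
      have hc : ∀ x : Fin n, ((x:ℕ) = (i:ℕ)) ↔ x = i := fun x => by
        rw [Fin.ext_iff]
      rw [Finset.sum_congr rfl (fun x _ => by rw [if_congr (hc x) rfl rfl]),
        Finset.sum_ite_eq' Finset.univ i, if_pos (Finset.mem_univ _), hMapp]
    have hS2 : (∑ x : Fin n, if (x:ℕ) + 1 = (i:ℕ) then lam * M x j else 0)
        = lam * Mentry n ψ D ((i:ℤ)+1-1) ((j:ℤ)+1) := by
      rcases Nat.eq_zero_or_pos (i:ℕ) with h0 | hpos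
      · rw [Finset.sum_eq_zero (fun x _ => by rw [if_neg (by omega)])]
        rw [show (i:ℤ)+1-1 = 0 by omega, Mentry_left n ψ D _ (by omega), mul_zero]
      · refine Finset.sum_eq_single_of_mem (⟨(i:ℕ)-1, by omega⟩ : Fin n)
          (Finset.mem_univ _) ?_ |>.trans ?_
        · intro x _ hx
          rw [if_neg (fun hh => hx (by rw [Fin.ext_iff]; simp only; omega))]
        · have hval : ((⟨(i:ℕ)-1, by omega⟩ : Fin n) : ℕ) = (i:ℕ)-1 := rfl
          rw [if_pos (by simp only [hval]; omega), hMapp]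
          congr 2 <;> simp only [hval] <;> omega
    have hS3 : (∑ x : Fin n, if (x:ℕ) = (i:ℕ) + 1 then lam * M x j else 0)
        = lam * Mentry n ψ D ((i:ℤ)+1+1) ((j:ℤ)+1) := by
      rcases eq_or_lt_of_le (Nat.succ_le_of_lt i.isLt) with h0 | hlt
      · rw [Finset.sum_eq_zero (fun x _ => by rw [if_neg (by omega)])]
        rw [show (i:ℤ)+1+1 = (n:ℤ)+1 by omega, Mentry_right n ψ D _ (by omega), mul_zero]
      · refine Finset.sum_eq_single_of_mem (⟨(i:ℕ)+1, hlt⟩ : Fin n)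
          (Finset.mem_univ _) ?_ |>.trans ?_
        · intro x _ hx
          rw [if_neg (fun hh => hx (by rw [Fin.ext_iff]; simp only; omega))]
        · have hval : ((⟨(i:ℕ)+1, hlt⟩ : Fin n) : ℕ) = (i:ℕ)+1 := rfl
          rw [if_pos (by simp only [hval]), hMapp]
          congr 2 <;> simp only [hval] <;> omega
    rw [hS1, hS2, hS3]
    have hrec := recur n lam piv ψ D hpiv hD hDne ((i:ℤ)+1) ((j:ℤ)+1)
    have hij : (((i:ℤ)+1 = (j:ℤ)+1)) ↔ i = j := by rw [Fin.ext_iff]; omega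
    rcases eq_or_ne i j with he | he
    · rw [if_pos he]; rw [if_pos (hij.mpr he)] at hrec; linarith
    · rw [if_neg he]; rw [if_neg (fun hh => he (hij.mp hh))] at hrec; linarith
  have hinv : Z⁻¹ = M := Matrix.inv_eq_right_inv hZM
  intro k l
  rw [hinv, hMapp]
  set p : ℤ := (k:ℤ)+1 with hp
  set q : ℤ := (l:ℤ)+1 with hq
  set m : ℤ := min p q with hm
  set Mx : ℤ := max p q with hMx
  have hm1 : 1 ≤ m := le_min (by omega) (by omega)
  have hMxn : Mx ≤ (n:ℤ) := max_le (by have := k.isLt; omega) (by have := l.isLt; omega)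
  have hmMx : m ≤ Mx := min_le_max
  have hm1' : (1:ℝ) ≤ (m:ℝ) := by exact_mod_cast hm1
  have hMxn' : ((Mx:ℤ):ℝ) ≤ (n:ℝ) := by exact_mod_cast hMxn
  set a : ℝ := ((m:ℤ):ℝ) * ψ with ha
  set b : ℝ := (((n:ℝ) + 1 - ((Mx:ℤ):ℝ))) * ψ with hb
  have ha0 : 0 ≤ a := mul_nonneg (by linarith) hψ0.le
  have hb0 : 0 ≤ b := mul_nonneg (by linarith) hψ0.le
  have hsa : 0 ≤ Real.sinh a := Real.sinh_nonneg_iff.mpr ha0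
  have hsb : 0 ≤ Real.sinh b := Real.sinh_nonneg_iff.mpr hb0
  -- rewrite the entry and its absolute value
  have hsgn : |(-1:ℝ)^(p+q)| = 1 := by
    rcases Int.even_or_odd (p+q) with h | h <;> simp [h.neg_one_zpow]
  have habs : |Mentry n ψ D p q| = Real.sinh a * Real.sinh b / D := by
    unfold Mentry
    rw [abs_div, abs_mul, abs_mul, hsgn,
      abs_of_nonneg hsa, abs_of_nonneg hsb, abs_of_pos hD0, one_mul]
  rw [habs]
  -- identify the distance
  set E : ℝ := Real.exp (-2 * ψ * ((n:ℝ) + 1)) with hE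
  have hE1 : E < 1 := by
    rw [hE, Real.exp_lt_one_iff]
    nlinarith
  have hE0 : 0 < E := Real.exp_pos _
  have hEpos : 0 < 1 - E := by linarith
  have hden0 : 0 < 2 * lam * Real.sinh ψ * (1 - E) := by positivity
  have hdist : |((l : ℕ) : ℝ) - ((k : ℕ) : ℝ)| = ((Mx:ℤ):ℝ) - ((m:ℤ):ℝ) := by
    rcases le_total (k:ℕ) (l:ℕ) with h | h
    · have hpq : p ≤ q := by rw [hp, hq]; omega
      have h' : ((k:ℕ):ℝ) ≤ ((l:ℕ):ℝ) := by exact_mod_cast h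
      rw [hMx, hm, max_eq_right hpq, min_eq_left hpq,
        abs_of_nonneg (sub_nonneg.mpr h'), hp, hq]
      push_cast
      ring
    · have hpq : q ≤ p := by rw [hp, hq]; omega
      have h' : ((l:ℕ):ℝ) ≤ ((k:ℕ):ℝ) := by exact_mod_cast h
      rw [hMx, hm, max_eq_left hpq, min_eq_right hpq,
        abs_of_nonpos (sub_nonpos.mpr h'), hp, hq]
      push_cast
      ring
  rw [hdist]
  have hsinhT : Real.sinh T = Real.exp T * (1 - E) / 2 := by
    rw [Real.sinh_eq]
    have hnegT : Real.exp (-T) = Real.exp T * E := by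
      rw [hE, ← Real.exp_add, hT]
      congr 1
      ring
    rw [hnegT]
    ring
  have hexp : Real.exp (-ψ * (((Mx:ℤ):ℝ) - ((m:ℤ):ℝ))) * Real.exp T
      = Real.exp a * Real.exp b := by
    rw [← Real.exp_add, ← Real.exp_add, hT, ha, hb]
    congr 1
    ring
  have hmain : 4 * (Real.sinh a * Real.sinh b) ≤ Real.exp a * Real.exp b := by
    have h2a := two_sinh_le_exp a
    have h2b := two_sinh_le_exp b
    nlinarith [Real.exp_pos a, Real.exp_pos b]
  rw [div_le_div_iff₀ hD0 hden0, hD, hsinhT]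
  calc Real.sinh a * Real.sinh b * (2 * lam * Real.sinh ψ * (1 - E))
      = (lam * Real.sinh ψ * (1 - E) / 2) * (4 * (Real.sinh a * Real.sinh b)) := by ring
    _ ≤ (lam * Real.sinh ψ * (1 - E) / 2) * (Real.exp a * Real.exp b) := by
        apply mul_le_mul_of_nonneg_left hmain
        positivity
    _ = Real.exp (-ψ * (((Mx:ℤ):ℝ) - ((m:ℤ):ℝ))) *
          (lam * Real.sinh ψ * (Real.exp T * (1 - E) / 2)) := by
        rw [← hexp]
        ring
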